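/- Let φ : 𝒳 → Prop be a predicate with P(φ(X)) ≤ ε and P(φ(X_cf) ∧ ¬φ(X)) = γ. For any classifier h : 𝒳 → Bool, there exists a classifier h₁ with P(h(X) ≠ h₁(X)) ≤ ε and influence ι(h₁) = P(h₁(X) ≠ h₁(X_cf)) ≥ γ/2. -/
import Mathlib


open Finset

noncomputable def Pr {Ω : Type*} [Fintype Ω] (p : Ω → ℝ) (E : Ω → Prop) [DecidablePred E] : ℝ :=
  ∑ ω, if E ω then p ω else 0

lemma Pr_mono {Ω : Type*} [Fintype Ω] (p : Ω → ℝ) (hp : ∀ ω, 0 ≤ p ω)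
    (E F : Ω → Prop) [DecidablePred E] [DecidablePred F] (hEF : ∀ ω, E ω → F ω) :
    Pr p E ≤ Pr p F := by
  apply Finset.sum_le_sum
  intro ω _
  by_cases hE : E ω
  · simp [hE, hEF ω hE]
  · simp only [hE, if_false]
    by_cases hF : F ω <;> simp [hF, hp ω]

lemma Pr_split {Ω : Type*} [Fintype Ω] (p : Ω → ℝ)
    (A : Ω → Prop) [DecidablePred A] (f : Ω → Bool) :
    Pr p A = Pr p (fun ω => A ω ∧ f ω = true) + Pr p (fun ω => A ω ∧ f ω = false) := by
  unfold Pr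
  rw [← Finset.sum_add_distrib]
  apply Finset.sum_congr rfl
  intro ω _
  by_cases hA : A ω <;> cases hf : f ω <;> simp [hA, hf]

/-- Half of Theorem 1: there exists a classifier `h₁` close to `h` on the data
distribution with influence at least `γ/2`. -/
theorem exists_high_influence {Ω 𝒳 : Type*} [Fintype Ω] [Fintype 𝒳] [DecidableEq 𝒳]
    (p : Ω → ℝ) (hp : ∀ ω, 0 ≤ p ω) (hsum : ∑ ω, p ω = 1)
    (X Xcf : Ω → 𝒳) (φ : 𝒳 → Prop) [DecidablePred φ] (ε γ : ℝ)
    (hε : Pr p (fun ω => φ (X ω)) ≤ ε)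
    (hγ : Pr p (fun ω => φ (Xcf ω) ∧ ¬φ (X ω)) = γ)
    (h : 𝒳 → Bool) :
    ∃ h₁ : 𝒳 → Bool,
      Pr p (fun ω => h (X ω) ≠ h₁ (X ω)) ≤ ε ∧
      γ / 2 ≤ Pr p (fun ω => h₁ (X ω) ≠ h₁ (Xcf ω)) := by
  set A : Ω → Prop := fun ω => φ (Xcf ω) ∧ ¬φ (X ω) with hA
  have hsplit := Pr_split p A (fun ω => h (X ω))
  rw [hγ] at hsplit
  -- one of the two halves is ≥ γ/2
  rcases le_or_gt (γ / 2) (Pr p (fun ω => A ω ∧ h (X ω) = false)) with hbig | hsmall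
  · -- choose constant true on φ
    refine ⟨fun x => if φ x then true else h x, ?_, ?_⟩
    · refine le_trans (Pr_mono p hp _ _ ?_) hε
      intro ω hω
      by_contra hφ
      simp [hφ] at hω
    · refine le_trans hbig (Pr_mono p hp _ _ ?_)
      rintro ω ⟨⟨hcf, hX⟩, hfalse⟩
      simp [hX, hcf, hfalse]
  · -- then the other half is ≥ γ/2; choose constant false on φ
    have hbig : γ / 2 ≤ Pr p (fun ω => A ω ∧ h (X ω) = true) := by linarith
    refine ⟨fun x => if φ x then false else h x, ?_, ?_⟩
    · refine le_trans (Pr_mono p hp _ _ ?_) hε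
      intro ω hω
      by_contra hφ
      simp [hφ] at hω
    · refine le_trans hbig (Pr_mono p hp _ _ ?_)
      rintro ω ⟨⟨hcf, hX⟩, htrue⟩
      simp [hX, hcf, htrue]
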